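/- Let R = k[x_1,...,x_d] with k a field of characteristic 0, α ∈ Z_{≥0}^d, and I = (x_i^{α_i} : i ∈ supp(α)). If c is a rational number with c ≥ max{α_1,...,α_d}, c > |supp(α)|, and cn ∈ Z for a given positive integer n, then I^⟨cn⟩ ⊆ I^n. -/

import Mathlib

/-- `IsDiffOp A n φ` says that the `A`-linear endomorphism `φ` of `R` is an
`A`-linear differential operator of order at most `n`. -/
def IsDiffOp (A : Type*) {R : Type*} [CommRing A] [CommRing R] [Algebra A R] :
    ℕ → (R →ₗ[A] R) → Prop
  | 0 => fun φ => ∃ r : R, φ = LinearMap.mulLeft A r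
  | n + 1 => fun φ => ∀ a : R,
      IsDiffOp A n (φ ∘ₗ LinearMap.mulLeft A a - LinearMap.mulLeft A a ∘ₗ φ)

theorem isDiffOp_comp_mulLeft (A : Type*) {R : Type*} [CommRing A] [CommRing R]
    [Algebra A R] (x : R) (n : ℕ) :
    ∀ φ : R →ₗ[A] R, IsDiffOp A n φ → IsDiffOp A n (φ ∘ₗ LinearMap.mulLeft A x) := by
  induction n with
  | zero =>
    rintro φ ⟨r, rfl⟩
    exact ⟨r * x, by ext y; simp [mul_assoc]⟩
  | succ n ih =>
    intro φ h a
    have h2 := ih _ (h a)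
    have key : (φ ∘ₗ LinearMap.mulLeft A x) ∘ₗ LinearMap.mulLeft A a -
        LinearMap.mulLeft A a ∘ₗ (φ ∘ₗ LinearMap.mulLeft A x) =
        (φ ∘ₗ LinearMap.mulLeft A a - LinearMap.mulLeft A a ∘ₗ φ) ∘ₗ LinearMap.mulLeft A x := by
      ext y
      simp [mul_left_comm]
    rw [key]
    exact h2

/-- The `n`-th differential power of an ideal `I` of the `A`-algebra `R`:
the set of `r ∈ R` such that `∂ r ∈ I` for every `A`-linear differential
operator `∂` of order at most `n - 1`. -/
def diffPow (A : Type*) {R : Type*} [CommRing A] [CommRing R] [Algebra A R]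
    (n : ℕ) (I : Ideal R) : Ideal R where
  carrier := {r | ∀ φ : R →ₗ[A] R, IsDiffOp A (n - 1) φ → φ r ∈ I}
  add_mem' := fun hx hy φ hφ => by simp [map_add]; exact I.add_mem (hx φ hφ) (hy φ hφ)
  zero_mem' := fun φ _ => by simpa using I.zero_mem
  smul_mem' := fun c x hx => by
    intro φ hφ
    have := hx (φ ∘ₗ LinearMap.mulLeft A c) (isDiffOp_comp_mulLeft A c _ φ hφ)
    simpa [smul_eq_mul] using this

section DiffOpLemmas

variable {A R : Type*} [CommRing A] [CommRing R] [Algebra A R]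

theorem isDiffOp_add : ∀ (n : ℕ) (φ ψ : R →ₗ[A] R), IsDiffOp A n φ → IsDiffOp A n ψ →
    IsDiffOp A n (φ + ψ)
  | 0, _, _, ⟨r, hr⟩, ⟨s, hs⟩ => ⟨r + s, by subst hr hs; ext y; simp [add_mul]⟩
  | n + 1, φ, ψ, hφ, hψ => fun a => by
      have key : (φ + ψ) ∘ₗ LinearMap.mulLeft A a - LinearMap.mulLeft A a ∘ₗ (φ + ψ)
          = (φ ∘ₗ LinearMap.mulLeft A a - LinearMap.mulLeft A a ∘ₗ φ)
            + (ψ ∘ₗ LinearMap.mulLeft A a - LinearMap.mulLeft A a ∘ₗ ψ) := by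
        ext y; simp; ring
      rw [key]
      exact isDiffOp_add n _ _ (hφ a) (hψ a)

theorem isDiffOp_succ : ∀ (n : ℕ) (φ : R →ₗ[A] R), IsDiffOp A n φ → IsDiffOp A (n + 1) φ
  | 0, _, ⟨r, hr⟩ => fun a => ⟨0, by subst hr; ext y; simp [mul_left_comm]⟩
  | n + 1, φ, hφ => fun a => isDiffOp_succ n _ (hφ a)

theorem isDiffOp_of_le {n m : ℕ} (h : n ≤ m) {φ : R →ₗ[A] R} (hφ : IsDiffOp A n φ) :
    IsDiffOp A m φ := by
  induction h with
  | refl => exact hφ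
  | step _ ih => exact isDiffOp_succ _ _ ih

theorem isDiffOp_mulLeft_comp (r : R) : ∀ (n : ℕ) (ψ : R →ₗ[A] R), IsDiffOp A n ψ →
    IsDiffOp A n (LinearMap.mulLeft A r ∘ₗ ψ)
  | 0, _, ⟨s, hs⟩ => ⟨r * s, by subst hs; ext y; simp [mul_assoc]⟩
  | n + 1, ψ, hψ => fun a => by
      have key : (LinearMap.mulLeft A r ∘ₗ ψ) ∘ₗ LinearMap.mulLeft A a
          - LinearMap.mulLeft A a ∘ₗ (LinearMap.mulLeft A r ∘ₗ ψ)
          = LinearMap.mulLeft A r ∘ₗ (ψ ∘ₗ LinearMap.mulLeft A a - LinearMap.mulLeft A a ∘ₗ ψ) := by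
        ext y; simp; ring
      rw [key]
      exact isDiffOp_mulLeft_comp r n _ (hψ a)

theorem isDiffOp_comp :
    ∀ (N m m' : ℕ) (φ ψ : R →ₗ[A] R), m + m' ≤ N → IsDiffOp A m φ → IsDiffOp A m' ψ →
      IsDiffOp A (m + m') (φ ∘ₗ ψ) := by
  intro N
  induction N with
  | zero =>
    rintro m m' φ ψ h hφ hψ
    obtain ⟨rfl, rfl⟩ : m = 0 ∧ m' = 0 := by omega
    obtain ⟨s, rfl⟩ := hψ
    exact isDiffOp_comp_mulLeft A s 0 φ hφ
  | succ N ih =>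
    rintro m m' φ ψ h hφ hψ
    match m' with
    | 0 =>
      obtain ⟨s, rfl⟩ := hψ
      exact isDiffOp_comp_mulLeft A s m φ hφ
    | m' + 1 =>
      match m with
      | 0 =>
        obtain ⟨r, rfl⟩ := hφ
        exact isDiffOp_of_le (by omega) (isDiffOp_mulLeft_comp r _ _ hψ)
      | m + 1 =>
        rw [show (m + 1) + (m' + 1) = (m + (m' + 1)) + 1 from by omega]
        intro a
        have key : (φ ∘ₗ ψ) ∘ₗ LinearMap.mulLeft A a - LinearMap.mulLeft A a ∘ₗ (φ ∘ₗ ψ)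
            = φ ∘ₗ (ψ ∘ₗ LinearMap.mulLeft A a - LinearMap.mulLeft A a ∘ₗ ψ)
              + (φ ∘ₗ LinearMap.mulLeft A a - LinearMap.mulLeft A a ∘ₗ φ) ∘ₗ ψ := by
          ext y; simp
        rw [key]
        have h1 : IsDiffOp A (m + 1 + m')
            (φ ∘ₗ (ψ ∘ₗ LinearMap.mulLeft A a - LinearMap.mulLeft A a ∘ₗ ψ)) :=
          ih (m + 1) m' _ _ (by omega) hφ (hψ a)
        have h2 : IsDiffOp A (m + (m' + 1))
            ((φ ∘ₗ LinearMap.mulLeft A a - LinearMap.mulLeft A a ∘ₗ φ) ∘ₗ ψ) :=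
          ih m (m' + 1) _ _ (by omega) (hφ a) hψ
        rw [show m + 1 + m' = m + (m' + 1) from by omega] at h1
        exact isDiffOp_add _ _ _ h1 h2

end DiffOpLemmas

section PDeriv

open MvPolynomial Finsupp

variable {k : Type*} [CommRing k] {d : ℕ}

theorem isDiffOp_pderiv (i : Fin d) :
    IsDiffOp k 1 ((pderiv i).toLinearMap : MvPolynomial (Fin d) k →ₗ[k] MvPolynomial (Fin d) k) := by
  intro a
  refine ⟨pderiv i a, ?_⟩
  ext y
  simp [pderiv_mul]
  ring

noncomputable def Dop : List (Fin d) → (MvPolynomial (Fin d) k →ₗ[k] MvPolynomial (Fin d) k)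
  | [] => LinearMap.id
  | i :: L => (pderiv i).toLinearMap ∘ₗ Dop L

noncomputable def degL : List (Fin d) → (Fin d →₀ ℕ)
  | [] => 0
  | i :: L => single i 1 + degL L

noncomputable def fall : List (Fin d) → (Fin d →₀ ℕ) → ℕ
  | [], _ => 1
  | i :: L, γ => fall L γ * ((γ - degL L) i)

theorem isDiffOp_Dop (L : List (Fin d)) :
    IsDiffOp k L.length (Dop L : MvPolynomial (Fin d) k →ₗ[k] MvPolynomial (Fin d) k) := by
  induction L with
  | nil => exact ⟨1, by ext y; simp [Dop]⟩
  | cons i L ih =>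
    have := isDiffOp_comp (1 + L.length) 1 L.length _ _ le_rfl (isDiffOp_pderiv i) ih
    rw [show (i :: L).length = 1 + L.length from by simp [Nat.add_comm]]
    exact this

theorem Dop_monomial (L : List (Fin d)) (γ : Fin d →₀ ℕ) (a : k) :
    Dop L (monomial γ a) = monomial (γ - degL L) (a * fall L γ) := by
  induction L with
  | nil => simp [Dop, degL, fall]
  | cons i L ih =>
    simp only [Dop, LinearMap.comp_apply, ih, Derivation.coeFn_coe, pderiv_monomial]
    rw [show γ - degL L - single i 1 = γ - degL (i :: L) from ?_]
    · congr 1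
      push_cast [fall]
      ring
    · rw [degL, tsub_tsub, add_comm]

theorem fall_pos (L : List (Fin d)) (γ : Fin d →₀ ℕ) (h : degL L ≤ γ) : 0 < fall L γ := by
  induction L with
  | nil => simp [fall]
  | cons i L ih =>
    rw [degL] at h
    have h1 : degL L ≤ γ := le_trans le_add_self h
    have h2 : degL L i + 1 ≤ γ i := by
      have := (Finsupp.le_def.mp h) i
      simpa [add_comm] using this
    have : 0 < (γ - degL L) i := by
      rw [Finsupp.tsub_apply]; omega
    exact Nat.mul_pos (ih h1) this

theorem fall_eq_zero (L : List (Fin d)) (γ : Fin d →₀ ℕ) (h : ¬ degL L ≤ γ) : fall L γ = 0 := by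
  induction L with
  | nil => simp [degL] at h
  | cons i L ih =>
    rw [fall]
    by_cases h1 : degL L ≤ γ
    · have h2 : ¬ (degL L i + 1 ≤ γ i) := by
        intro hc
        apply h
        rw [degL, Finsupp.le_def]
        intro j
        rcases eq_or_ne j i with rfl | hj
        · simpa [add_comm] using hc
        · have := (Finsupp.le_def.mp h1) j
          simpa [Finsupp.single_apply, hj.symm] using this
      have : (γ - degL L) i = 0 := by
        rw [Finsupp.tsub_apply]; omega
      simp [this]
    · simp [ih h1]

theorem coeff_Dop (L : List (Fin d)) (p : MvPolynomial (Fin d) k) (γ : Fin d →₀ ℕ)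
    (h : degL L ≤ γ) :
    coeff (γ - degL L) (Dop L p) = coeff γ p * fall L γ := by
  conv_lhs => rw [p.as_sum]
  rw [map_sum]
  simp_rw [Dop_monomial]
  rw [MvPolynomial.coeff_sum]
  simp_rw [coeff_monomial]
  rw [Finset.sum_eq_single γ]
  · split_ifs with hif
    · rfl
    · exact absurd rfl hif
  · intro v hv hne
    split_ifs with hif
    · by_cases hb : degL L ≤ v
      · exact absurd (by
          have := congrArg (· + degL L) hif
          simpa [tsub_add_cancel_of_le hb, tsub_add_cancel_of_le h] using this) hne
      · simp [fall_eq_zero L v hb]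
    · rfl
  · intro hγ
    rw [MvPolynomial.notMem_support_iff] at hγ
    simp [hγ]

theorem degL_apply (L : List (Fin d)) (j : Fin d) : degL L j = L.count j := by
  induction L with
  | nil => simp [degL]
  | cons i L ih =>
    rw [degL]
    rcases eq_or_ne j i with rfl | hj
    · simp [ih, List.count_cons, Nat.add_comm]
    · simp [ih, List.count_cons, hj, Finsupp.single_apply, hj.symm]

theorem degL_toList (β : Fin d →₀ ℕ) : degL β.toMultiset.toList = β := by
  ext j
  rw [degL_apply, ← Multiset.coe_count, Multiset.coe_toList, Finsupp.count_toMultiset]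

theorem length_toList_finsupp (β : Fin d →₀ ℕ) :
    β.toMultiset.toList.length = β.sum fun _ m => m := by
  rw [Multiset.length_toList, Finsupp.card_toMultiset]; rfl

end PDeriv

theorem exists_le_sum {ι : Type*} [Fintype ι] [DecidableEq ι] (a : ι → ℕ) :
    ∀ n : ℕ, n ≤ ∑ i, a i → ∃ ω : ι → ℕ, (∀ i, ω i ≤ a i) ∧ ∑ i, ω i = n := by
  intro n
  induction n generalizing a with
  | zero => exact fun _ => ⟨0, fun i => Nat.zero_le _, by simp⟩
  | succ n ih =>
    intro h
    have hpos : 0 < ∑ i, a i := lt_of_lt_of_le (Nat.succ_pos n) h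
    obtain ⟨i₀, -, hi₀⟩ := Finset.exists_lt_of_sum_lt (f := fun _ : ι => 0) (by simpa using hpos)
    set a' := Function.update a i₀ (a i₀ - 1) with ha'
    have hsum : ∑ i, a' i = (∑ i, a i) - 1 := by
      rw [ha', Finset.sum_update_of_mem (Finset.mem_univ i₀), Finset.sdiff_singleton_eq_erase,
        ← Finset.sum_erase_add _ _ (Finset.mem_univ i₀)]
      omega
    obtain ⟨ω', hω'le, hω'sum⟩ := ih a' (by omega)
    refine ⟨Function.update ω' i₀ (ω' i₀ + 1), fun i => ?_, ?_⟩
    · rcases eq_or_ne i i₀ with rfl | hi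
      · have := hω'le i
        simp only [ha', Function.update_self] at this ⊢
        omega
      · simpa [ha', Function.update_of_ne hi] using hω'le i
    · rw [Finset.sum_update_of_mem (Finset.mem_univ i₀), Finset.sdiff_singleton_eq_erase,
        ← Finset.sum_erase_add _ ω' (Finset.mem_univ i₀)] at *
      omega

theorem prod_pow_mem {R : Type*} [CommRing R] (I : Ideal R) {ι : Type*} (s : Finset ι)
    (f : ι → R) (ω : ι → ℕ) (h : ∀ i ∈ s, ω i ≠ 0 → f i ∈ I) :
    (∏ i ∈ s, f i ^ ω i) ∈ I ^ (∑ i ∈ s, ω i) := by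
  classical
  induction s using Finset.induction with
  | empty => simp
  | insert a s hnot ih =>
    rw [Finset.prod_insert hnot, Finset.sum_insert hnot, pow_add]
    refine Ideal.mul_mem_mul ?_ (ih fun i hi => h i (Finset.mem_insert_of_mem hi))
    rcases Nat.eq_zero_or_pos (ω a) with h0 | hpos
    · simp [h0]
    · exact Ideal.pow_mem_pow (h a (Finset.mem_insert_self a s) (by omega)) _

open MvPolynomial Finsupp in
/-- If `c ≥ max α_i`, `c > |supp α|` and `cn ∈ ℤ`, then `I^⟨cn⟩ ⊆ I^n` for the
pure-power ideal `I = (x_i^{α_i} : i ∈ supp α)`. -/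
theorem diffPow_le_pow {k : Type*} [Field k] [CharZero k] {d : ℕ}
    (α : Fin d → ℕ)
    (I : Ideal (MvPolynomial (Fin d) k))
    (hI : I = Ideal.span
      ((fun i => (MvPolynomial.X i : MvPolynomial (Fin d) k) ^ α i) ''
        {i : Fin d | α i ≠ 0}))
    (c : ℚ) (hc1 : ∀ i, (α i : ℚ) ≤ c)
    (hc2 : ((Finset.univ.filter fun i => α i ≠ 0).card : ℚ) < c)
    (n : ℕ) (hn : 0 < n) (cn : ℕ) (hcn : (cn : ℚ) = c * n) :
    diffPow k cn I ≤ I ^ n := by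
  classical
  intro r hr
  have hc0 : (0 : ℚ) < c := lt_of_le_of_lt (by positivity) hc2
  have hcn1 : 1 ≤ cn := by
    rcases Nat.eq_zero_or_pos cn with h0 | h; swap; · exact h
    rw [h0] at hcn
    have : (0 : ℚ) < c * n := by
      have : (0:ℚ) < (n:ℚ) := by exact_mod_cast hn
      positivity
    rw [← hcn] at this; norm_num at this
  have hI' : I = Ideal.span ((fun s => monomial s (1 : k)) ''
      ((fun i => Finsupp.single i (α i)) '' {i : Fin d | α i ≠ 0})) := by
    rw [hI, Set.image_image]
    congr 1
    ext p
    constructor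
    · rintro ⟨i, hi, rfl⟩; exact ⟨i, hi, (X_pow_eq_monomial).symm⟩
    · rintro ⟨i, hi, rfl⟩; exact ⟨i, hi, X_pow_eq_monomial⟩
  rw [r.as_sum]
  refine Ideal.sum_mem _ fun γ hγ => ?_
  rw [show (monomial γ (coeff γ r) : MvPolynomial (Fin d) k)
      = C (coeff γ r) * monomial γ 1 from by rw [C_mul_monomial, mul_one]]
  refine Ideal.mul_mem_left _ _ ?_
  -- q i : how many times the generator x_i^{α i} can divide x^γ
  set q : Fin d → ℕ := fun i => if α i ≠ 0 ∧ α i ≤ γ i then γ i / α i else 0 with hq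
  -- Step A : the combinatorial consequence of differential-power membership
  have stepA : cn ≤ ∑ i, (if α i ≠ 0 ∧ α i ≤ γ i then γ i - α i + 1 else 0) := by
    by_contra hA
    push_neg at hA
    set f : Fin d → ℕ := fun i => if α i ≠ 0 ∧ α i ≤ γ i then γ i - α i + 1 else 0 with hf
    set β : Fin d →₀ ℕ := Finsupp.equivFunOnFinite.symm f with hβ
    have hβapp : ∀ i, β i = f i := fun i => rfl
    set L := β.toMultiset.toList with hL
    have hdeg : degL L = β := degL_toList β
    have hlen : L.length ≤ cn - 1 := by
      have h3 : L.length = ∑ i, f i := by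
        rw [hL, length_toList_finsupp, Finsupp.sum_fintype _ _ (fun i => rfl)]
        exact Finset.sum_congr rfl fun i _ => hβapp i
      have hA' : L.length < cn := by rw [h3]; exact hA
      omega
    have hop : IsDiffOp k (cn - 1) (Dop L) := isDiffOp_of_le hlen (isDiffOp_Dop L)
    have hmem := hr _ hop
    have hβγ : degL L ≤ γ := by
      rw [hdeg, Finsupp.le_def]
      intro i
      rw [hβapp, hf]
      dsimp only
      split_ifs with h <;> omega
    have hco : coeff (γ - degL L) (Dop L r) ≠ 0 := by
      rw [coeff_Dop L r γ hβγ]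
      refine mul_ne_zero (MvPolynomial.mem_support_iff.mp hγ) ?_
      exact Nat.cast_ne_zero.mpr ((Nat.pos_iff_ne_zero.mp (fall_pos L γ hβγ)))
    rw [hI'] at hmem
    obtain ⟨si, hsi, hle⟩ := mem_ideal_span_monomial_image.mp hmem _ (MvPolynomial.mem_support_iff.mpr hco)
    obtain ⟨i, hiα, rfl⟩ := hsi
    have h2 := Finsupp.le_def.mp hle i
    rw [Finsupp.single_apply, if_pos rfl, hdeg, Finsupp.tsub_apply, hβapp, hf] at h2
    dsimp only at h2
    split_ifs at h2 with h3
    · omega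
    · have : γ i < α i := by
        rcases Nat.lt_or_ge (γ i) (α i) with h | h
        · exact h
        · exact absurd ⟨hiα, h⟩ h3
      omega
  -- Step B : n ≤ ∑ q i
  have stepB : n ≤ ∑ i, q i := by
    have key : ∀ i, ((if α i ≠ 0 ∧ α i ≤ γ i then γ i - α i + 1 else 0 : ℕ) : ℚ) ≤ c * q i := by
      intro i
      rw [hq]
      dsimp only
      split_ifs with h
      · obtain ⟨h1, h2⟩ := h
        have hα : 0 < α i := Nat.pos_of_ne_zero h1
        have hq1 : 1 ≤ γ i / α i := (Nat.one_le_div_iff hα).mpr h2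
        have hmod := Nat.div_add_mod (γ i) (α i)
        have hmodlt : γ i % α i < α i := Nat.mod_lt _ hα
        have hnat : γ i - α i + 1 ≤ (γ i / α i) * α i := by
          have hge : α i ≤ (γ i / α i) * α i := Nat.le_mul_of_pos_left _ hq1
          have hcomm : (γ i / α i) * α i = α i * (γ i / α i) := Nat.mul_comm _ _
          omega
        calc ((γ i - α i + 1 : ℕ) : ℚ) ≤ (((γ i / α i) * α i : ℕ) : ℚ) := by exact_mod_cast hnat
          _ = ((γ i / α i : ℕ) : ℚ) * ((α i : ℕ) : ℚ) := by push_cast; ring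
          _ ≤ ((γ i / α i : ℕ) : ℚ) * c := by
              exact mul_le_mul_of_nonneg_left (hc1 i) (by positivity)
          _ = c * ((γ i / α i : ℕ) : ℚ) := by ring
      · simp
    have hsum : (cn : ℚ) ≤ c * ∑ i, ((q i : ℕ) : ℚ) := by
      calc (cn : ℚ) ≤ ((∑ i, (if α i ≠ 0 ∧ α i ≤ γ i then γ i - α i + 1 else 0) : ℕ) : ℚ) := by
            exact_mod_cast stepA
        _ = ∑ i, ((if α i ≠ 0 ∧ α i ≤ γ i then γ i - α i + 1 else 0 : ℕ) : ℚ) := by push_cast; rfl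
        _ ≤ ∑ i, c * ((q i : ℕ) : ℚ) := Finset.sum_le_sum fun i _ => key i
        _ = c * ∑ i, ((q i : ℕ) : ℚ) := by rw [Finset.mul_sum]
    rw [hcn] at hsum
    have := le_of_mul_le_mul_left hsum hc0
    have hcast : ((n : ℕ) : ℚ) ≤ ((∑ i, q i : ℕ) : ℚ) := by push_cast; exact this
    exact_mod_cast hcast
  obtain ⟨ω, hωle, hωsum⟩ := exists_le_sum q n stepB
  set e : Fin d →₀ ℕ := Finsupp.equivFunOnFinite.symm (fun i => α i * ω i) with he
  have heapp : ∀ i, e i = α i * ω i := fun i => rfl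
  have hqa : ∀ i, α i * q i ≤ γ i := by
    intro i
    rw [hq]
    dsimp only
    split_ifs with h
    · calc α i * (γ i / α i) = γ i / α i * α i := by ring
        _ ≤ γ i := Nat.div_mul_le_self _ _
    · simp
  have heγ : e ≤ γ := by
    rw [Finsupp.le_def]
    intro i
    rw [heapp]
    calc α i * ω i ≤ α i * q i := Nat.mul_le_mul_left _ (hωle i)
      _ ≤ γ i := hqa i
  rw [show (monomial γ (1:k) : MvPolynomial (Fin d) k)
      = monomial (γ - e) 1 * monomial e 1 from by
    rw [monomial_mul, mul_one, tsub_add_cancel_of_le heγ]]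
  refine Ideal.mul_mem_left _ _ ?_
  have hmon : (monomial e (1:k) : MvPolynomial (Fin d) k) = ∏ i, (X i ^ α i) ^ ω i := by
    simp_rw [← pow_mul]
    rw [monomial_eq, C_1, one_mul, Finsupp.prod_fintype _ _ (fun i => pow_zero _)]
    exact Finset.prod_congr rfl fun i _ => by rw [heapp]
  rw [hmon, ← hωsum]
  refine prod_pow_mem I Finset.univ _ ω fun i _ hωi => ?_
  have hαi : α i ≠ 0 := by
    intro h0
    apply hωi
    have := hωle i
    rw [hq] at this
    simp [h0] at this
    omega
  rw [hI]
  exact Ideal.subset_span ⟨i, hαi, rfl⟩
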